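/- For the hypergraph product construction from a single parity check matrix H, the resulting check matrices satisfy H_X · H_Z^T = 0 over F_2, so the construction yields a valid CSS code. -/

import Mathlib

open Kronecker

/-- The hypergraph product check matrices H_X = (H ⊗ I_n | I_m ⊗ Hᵀ) and
H_Z = (I_n ⊗ H | Hᵀ ⊗ I_m) satisfy H_X · H_Zᵀ = 0 over F_2, giving a valid CSS code. -/
theorem stmt_4 (m n : ℕ) (H : Matrix (Fin m) (Fin n) (ZMod 2)) :
    (Matrix.fromCols (H ⊗ₖ (1 : Matrix (Fin n) (Fin n) (ZMod 2)))
        ((1 : Matrix (Fin m) (Fin m) (ZMod 2)) ⊗ₖ H.transpose)) *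
      (Matrix.fromCols ((1 : Matrix (Fin n) (Fin n) (ZMod 2)) ⊗ₖ H)
        (H.transpose ⊗ₖ (1 : Matrix (Fin m) (Fin m) (ZMod 2)))).transpose = 0 := by
  rw [Matrix.transpose_fromCols, Matrix.fromCols_mul_fromRows]
  simp only [← Matrix.kroneckerMap_transpose, Matrix.transpose_one, Matrix.transpose_transpose,
    ← Matrix.mul_kronecker_mul, Matrix.mul_one, Matrix.one_mul]
  ext i j
  simp only [Matrix.add_apply, Matrix.zero_apply]
  exact CharTwo.add_self_eq_zero _
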